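/- Regret of SMART with randomized threshold: in the general online learning setting with 0 ≤ ℓ_t(a) ≤ 1 for all t and a, let g : ℕ → ℝ be monotone nondecreasing with g(k) ≥ 0 for all k and g(n) > 0. Let b be a fixed map from finite tuples of loss functions on A to A such that for every 0 ≤ s ≤ n−1, ∑_{t=s+1}^n ℓ_t(b(ℓ_{s+1}, …, ℓ_{t−1})) − inf_{a∈A} ∑_{t=s+1}^n ℓ_t(a) ≤ g(n − s). For u ∈ [0,1] set θ(u) := g(n)·ln(1 + (e−1)u), let t_sw(u) := min{1 ≤ t ≤ n−1 : Σ_t > θ(u)} (with t_sw(u) := n if no such t exists), and let the action sequence a(u) be given by a_t(u) = a*_{t−1} for t ≤ t_sw(u) and a_t(u) = b(ℓ_{t_sw(u)+1}, …, ℓ_{t−1}) for t > t_sw(u). Then ∫_0^1 Reg(a(u)) du ≤ (e/(e−1))·min{Σ_n, g(n)} + 1, where Reg(a(u)) := ∑_{t=1}^n ℓ_t(a_t(u)) − L_n(a*_n). -/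

import Mathlib

open intervalIntegral in
lemma smart_log_integral_aux (k c : ℝ) (hk : 0 < k) (hc : 0 ≤ c) :
    ∫ u in (0:ℝ)..c, Real.log (1 + k*u)
      = ((1+k*c) * Real.log (1+k*c) - (1+k*c) + 1)/k := by
  have hpos : ∀ u ∈ Set.uIcc (0:ℝ) c, 0 < 1 + k*u := by
    intro u hu
    rw [Set.uIcc_of_le hc] at hu
    nlinarith [hu.1]
  have hcont : ContinuousOn (fun u => Real.log (1 + k*u)) (Set.uIcc (0:ℝ) c) := by
    intro u hu
    have h1 : ContinuousAt (fun v : ℝ => 1 + k*v) u := by fun_prop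
    exact (h1.log (ne_of_gt (hpos u hu))).continuousWithinAt
  have hderiv : ∀ u ∈ Set.uIcc (0:ℝ) c,
      HasDerivAt (fun v => ((1+k*v) * Real.log (1+k*v) - (1+k*v))/k)
        (Real.log (1 + k*u)) u := by
    intro u hu
    have hy := hpos u hu
    have h1 : HasDerivAt (fun v : ℝ => 1 + k*v) k u := by
      simpa using ((hasDerivAt_id u).const_mul k).const_add 1
    have h2 : HasDerivAt (fun v : ℝ => Real.log (1 + k*v)) ((1+k*u)⁻¹ * k) u :=
      by have := (Real.hasDerivAt_log (ne_of_gt hy)).comp u h1; exact this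
    have h4 := ((h1.mul h2).sub h1).div_const k
    refine h4.congr_deriv ?_
    field_simp
    ring
  rw [integral_eq_sub_of_hasDerivAt hderiv (hcont.intervalIntegrable)]
  have h0 : Real.log (1 + k*0) = 0 := by norm_num
  rw [h0]
  ring

/-- **Regret of SMART with randomized threshold.** Losses in `[0,1]`, `g` monotone
nonnegative with `g n > 0`, and a backup algorithm `b` (a fixed map from finite tuples
of loss functions to actions) satisfying, for every `0 ≤ s ≤ n-1`, the worst-case
guarantee `g (n - s)` on rounds `s+1, …, n`.  For `u ∈ [0,1]` set
`θ u = g n · ln (1 + (e-1) u)`, let `tsw u` be the first `1 ≤ t ≤ n-1` with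
`Sg t > θ u` (`tsw u = n` if none), and let the action sequence `a u` play FTL up to
round `tsw u` and then `b` on the remaining rounds (resetting losses).  Then the
average regret `∫_0^1 Reg(a u) du` is at most `(e/(e-1)) · min (Sg n) (g n) + 1`. -/
theorem smart_randomized_threshold_regret
    {A : Type*} [Nonempty A] (n : ℕ) (hn : 1 ≤ n)
    (ℓ : ℕ → A → ℝ)
    (hℓ : ∀ t ∈ Finset.Icc 1 n, ∀ a : A, ℓ t a ∈ Set.Icc (0 : ℝ) 1)
    (astar : ℕ → A)
    (hmin : ∀ t ∈ Finset.Icc 1 n, ∀ a : A,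
      ∑ i ∈ Finset.Icc 1 t, ℓ i (astar t) ≤ ∑ i ∈ Finset.Icc 1 t, ℓ i a)
    (Sg : ℕ → ℝ)
    (hSg : ∀ t, Sg t = ∑ i ∈ Finset.Icc 1 t,
        ((∑ j ∈ Finset.Icc 1 i, ℓ j (astar (i - 1))) - ∑ j ∈ Finset.Icc 1 i, ℓ j (astar i)))
    (g : ℕ → ℝ) (hgmono : Monotone g) (hg0 : ∀ k, 0 ≤ g k) (hgn : 0 < g n)
    (b : List (A → ℝ) → A)
    (hb : ∀ s : ℕ, s ≤ n - 1 →
      (∑ t ∈ Finset.Icc (s + 1) n,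
          ℓ t (b ((List.range (t - 1 - s)).map (fun i => ℓ (s + 1 + i)))))
        - (⨅ a' : A, ∑ t ∈ Finset.Icc (s + 1) n, ℓ t a') ≤ g (n - s))
    (θ : ℝ → ℝ) (hθ : ∀ u, θ u = g n * Real.log (1 + (Real.exp 1 - 1) * u))
    (tsw : ℝ → ℕ)
    (htsw : ∀ u ∈ Set.Icc (0 : ℝ) 1,
      1 ≤ tsw u ∧ tsw u ≤ n ∧ (∀ t, 1 ≤ t → t < tsw u → Sg t ≤ θ u)
        ∧ (tsw u < n → θ u < Sg (tsw u)))
    (a : ℝ → ℕ → A)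
    (ha1 : ∀ u : ℝ, ∀ t ≤ tsw u, a u t = astar (t - 1))
    (ha2 : ∀ u : ℝ, ∀ t, tsw u < t →
      a u t = b ((List.range (t - 1 - tsw u)).map (fun i => ℓ (tsw u + 1 + i)))) :
    (∫ u in (0 : ℝ)..1,
        ((∑ t ∈ Finset.Icc 1 n, ℓ t (a u t)) - ∑ i ∈ Finset.Icc 1 n, ℓ i (astar n)))
      ≤ (Real.exp 1 / (Real.exp 1 - 1)) * min (Sg n) (g n) + 1 := by
  set E : ℝ := Real.exp 1 with hE
  set k : ℝ := E - 1 with hkdef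
  set R : ℝ → ℝ := fun u =>
    (∑ t ∈ Finset.Icc 1 n, ℓ t (a u t)) - ∑ i ∈ Finset.Icc 1 n, ℓ i (astar n) with hRdef
  have hE1 : 1 < E := by
    have := Real.add_one_lt_exp (x := 1) one_ne_zero
    rw [hE]; linarith
  have hk : 0 < k := by rw [hkdef]; linarith
  -- basic sum facts
  have hL : ∀ (m : ℕ) (a0 : A), ∑ j ∈ Finset.Icc 1 (m+1), ℓ j a0
      = (∑ j ∈ Finset.Icc 1 m, ℓ j a0) + ℓ (m+1) a0 :=
    fun m a0 => Finset.sum_Icc_succ_top (Nat.succ_le_succ m.zero_le) _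
  have hSgsucc : ∀ m : ℕ, Sg (m+1) = Sg m
      + ((∑ j ∈ Finset.Icc 1 (m+1), ℓ j (astar m))
        - ∑ j ∈ Finset.Icc 1 (m+1), ℓ j (astar (m+1))) := by
    intro m
    rw [hSg (m+1), hSg m, Finset.sum_Icc_succ_top (Nat.succ_le_succ m.zero_le)]
    simp
  have hSg0 : Sg 0 = 0 := by rw [hSg]; simp
  -- FTL identity
  have hFTL : ∀ m : ℕ, ∑ t ∈ Finset.Icc 1 m, ℓ t (astar (t-1))
      = Sg m + ∑ i ∈ Finset.Icc 1 m, ℓ i (astar m) := by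
    intro m
    induction m with
    | zero => simp [hSg0]
    | succ m ih =>
      have e0 : ∑ t ∈ Finset.Icc 1 (m+1), ℓ t (astar (t-1))
          = (∑ t ∈ Finset.Icc 1 m, ℓ t (astar (t-1))) + ℓ (m+1) (astar m) := by
        rw [Finset.sum_Icc_succ_top (Nat.succ_le_succ m.zero_le)]
        simp
      have e1 := hSgsucc m
      have e2 := hL m (astar m)
      rw [e0, ih, e1]
      linarith
  -- Sg is monotone up to n
  have hstep' : ∀ m : ℕ, m + 1 ≤ n → Sg m ≤ Sg (m+1) := by
    intro m hm
    have h := hmin (m+1) (Finset.mem_Icc.mpr ⟨Nat.succ_le_succ m.zero_le, hm⟩) (astar m)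
    have := hSgsucc m
    linarith
  have hSgmono : ∀ s t : ℕ, s ≤ t → t ≤ n → Sg s ≤ Sg t := by
    intro s t hst htn
    induction t with
    | zero => rw [Nat.le_zero.mp hst]
    | succ t iht =>
      rcases Nat.lt_or_ge s (t+1) with h|h
      · exact le_trans (iht (Nat.lt_succ_iff.mp h) (le_trans (Nat.le_succ t) htn))
          (hstep' t htn)
      · rw [le_antisymm hst h]
  have hSgnn : ∀ t : ℕ, t ≤ n → 0 ≤ Sg t := by
    intro t ht
    rw [← hSg0]; exact hSgmono 0 t t.zero_le ht
  -- steps of size ≤ 1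
  have hstep1 : ∀ m : ℕ, m + 1 ≤ n → Sg (m+1) ≤ Sg m + 1 := by
    intro m hm
    have e1 := hSgsucc m
    have e2 := hL m (astar m)
    have e3 := hL m (astar (m+1))
    have h4 := hℓ (m+1) (Finset.mem_Icc.mpr ⟨Nat.succ_le_succ m.zero_le, hm⟩) (astar m)
    have h5 := hℓ (m+1) (Finset.mem_Icc.mpr ⟨Nat.succ_le_succ m.zero_le, hm⟩) (astar (m+1))
    obtain ⟨h4a, h4b⟩ := h4
    obtain ⟨h5a, h5b⟩ := h5
    rcases Nat.eq_zero_or_pos m with h|h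
    · subst h
      have hemp : (Finset.Icc 1 0 : Finset ℕ) = ∅ := by simp
      rw [hemp, Finset.sum_empty] at e2 e3
      linarith
    · have h6 := hmin m (Finset.mem_Icc.mpr ⟨h, le_trans (Nat.le_succ m) hm⟩) (astar (m+1))
      linarith
  -- θ is nonnegative on [0,1]
  have hθnn : ∀ u : ℝ, 0 ≤ u → 0 ≤ θ u := by
    intro u hu
    rw [hθ u]
    have h1 : (0:ℝ) ≤ Real.log (1 + k*u) := Real.log_nonneg (by nlinarith)
    exact mul_nonneg (le_of_lt hgn) h1
  -- pointwise bound 1 : R u ≤ θ u + g n + 1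
  have P1 : ∀ u ∈ Set.Icc (0:ℝ) 1, R u ≤ θ u + g n + 1 := by
    intro u hu
    obtain ⟨hs1, hsn, hbelow, habove⟩ := htsw u hu
    have hθ0 : 0 ≤ θ u := hθnn u hu.1
    have hSgs : Sg (tsw u) ≤ θ u + 1 := by
      rcases Nat.lt_or_ge 1 (tsw u) with h|h
      · obtain ⟨m, hm⟩ : ∃ m, tsw u = m + 1 := ⟨tsw u - 1, by omega⟩
        have hb1 : Sg m ≤ θ u := hbelow m (by omega) (by omega)
        have hb2 := hstep1 m (by omega)
        rw [hm]; linarith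
      · have h1 : tsw u = 1 := le_antisymm h hs1
        have hb2 := hstep1 0 hn
        rw [h1]; linarith
    have hsplit : ∑ t ∈ Finset.Icc 1 n, ℓ t (a u t)
        = (∑ t ∈ Finset.Icc 1 (tsw u), ℓ t (a u t))
          + ∑ t ∈ Finset.Icc (tsw u + 1) n, ℓ t (a u t) := by
      have h := Finset.sum_Ioc_consecutive (fun t => ℓ t (a u t)) (Nat.zero_le (tsw u)) hsn
      rw [← Finset.Icc_add_one_left_eq_Ioc, ← Finset.Icc_add_one_left_eq_Ioc, ← Finset.Icc_add_one_left_eq_Ioc] at h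
      exact h.symm
    have hfirst : ∑ t ∈ Finset.Icc 1 (tsw u), ℓ t (a u t)
        ≤ Sg (tsw u) + ∑ i ∈ Finset.Icc 1 (tsw u), ℓ i (astar n) := by
      have e : ∑ t ∈ Finset.Icc 1 (tsw u), ℓ t (a u t)
          = ∑ t ∈ Finset.Icc 1 (tsw u), ℓ t (astar (t-1)) :=
        Finset.sum_congr rfl (fun t ht => by rw [ha1 u t (Finset.mem_Icc.mp ht).2])
      rw [e, hFTL]
      have := hmin (tsw u) (Finset.mem_Icc.mpr ⟨hs1, hsn⟩) (astar n)
      linarith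
    have hLsum : (∑ i ∈ Finset.Icc 1 (tsw u), ℓ i (astar n))
        + ∑ t ∈ Finset.Icc (tsw u + 1) n, ℓ t (astar n)
        = ∑ i ∈ Finset.Icc 1 n, ℓ i (astar n) := by
      have h := Finset.sum_Ioc_consecutive (fun t => ℓ t (astar n)) (Nat.zero_le (tsw u)) hsn
      rw [← Finset.Icc_add_one_left_eq_Ioc, ← Finset.Icc_add_one_left_eq_Ioc, ← Finset.Icc_add_one_left_eq_Ioc] at h
      exact h
    simp only [hRdef]
    rcases eq_or_lt_of_le hsn with hcase|hcase
    · -- tsw u = n : no switch, pure FTL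
      have hemp : Finset.Icc (tsw u + 1) n = ∅ := Finset.Icc_eq_empty (by omega)
      rw [hsplit, hemp, Finset.sum_empty]
      rw [hcase] at hfirst hSgs ⊢
      have hgnn := hg0 n
      linarith
    · -- tsw u < n : switch to backup
      have hble : tsw u ≤ n - 1 := by omega
      have hbb := hb (tsw u) hble
      have hsecond : ∑ t ∈ Finset.Icc (tsw u + 1) n, ℓ t (a u t)
          = ∑ t ∈ Finset.Icc (tsw u + 1) n,
              ℓ t (b ((List.range (t - 1 - tsw u)).map (fun i => ℓ (tsw u + 1 + i)))) :=
        Finset.sum_congr rfl (fun t ht => by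
          have h1 := (Finset.mem_Icc.mp ht).1
          rw [ha2 u t (by omega)])
      have hinf : (⨅ a' : A, ∑ t ∈ Finset.Icc (tsw u + 1) n, ℓ t a')
          ≤ ∑ t ∈ Finset.Icc (tsw u + 1) n, ℓ t (astar n) := by
        apply ciInf_le
        refine ⟨0, ?_⟩
        rintro y ⟨a', rfl⟩
        refine Finset.sum_nonneg fun t ht => ?_
        obtain ⟨ht1, ht2⟩ := Finset.mem_Icc.mp ht
        exact (hℓ t (Finset.mem_Icc.mpr ⟨by omega, ht2⟩) a').1
      have hgle : g (n - tsw u) ≤ g n := hgmono (Nat.sub_le n (tsw u))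
      rw [hsplit, hsecond]
      linarith
  -- pointwise bound 2 : if the threshold already dominates Sg n, no switch occurs
  have P2 : ∀ u ∈ Set.Icc (0:ℝ) 1, Sg n ≤ θ u → R u ≤ Sg n := by
    intro u hu hSθ
    obtain ⟨hs1, hsn, hbelow, habove⟩ := htsw u hu
    have htn : tsw u = n := by
      by_contra h
      have hlt : tsw u < n := lt_of_le_of_ne hsn h
      have h1 := habove hlt
      have h2 := hSgmono (tsw u) n (le_of_lt hlt) le_rfl
      linarith
    have e : ∑ t ∈ Finset.Icc 1 n, ℓ t (a u t)
        = ∑ t ∈ Finset.Icc 1 n, ℓ t (astar (t-1)) :=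
      Finset.sum_congr rfl fun t ht => by
        rw [ha1 u t (htn ▸ (Finset.mem_Icc.mp ht).2)]
    simp only [hRdef]
    rw [e, hFTL n]
    linarith
  -- main case split on integrability
  by_cases hInt : IntervalIntegrable R MeasureTheory.volume 0 1
  · -- the bound function and its integral
    set B : ℝ → ℝ := fun u => g n * Real.log (1 + k*u) + (g n + 1) with hBdef
    have hlogint : ∀ c : ℝ, 0 ≤ c →
        IntervalIntegrable (fun u => Real.log (1 + k*u)) MeasureTheory.volume 0 c := by
      intro c hc
      apply ContinuousOn.intervalIntegrable
      intro u hu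
      rw [Set.uIcc_of_le hc] at hu
      have h1 : ContinuousAt (fun v : ℝ => 1 + k*v) u := by fun_prop
      have hne : (1 + k*u) ≠ 0 := by nlinarith [hu.1]
      exact (h1.log hne).continuousWithinAt
    have hBcont : ∀ c : ℝ, 0 ≤ c → IntervalIntegrable B MeasureTheory.volume 0 c := by
      intro c hc
      exact ((hlogint c hc).const_mul (g n)).add intervalIntegrable_const
    have hBeq : ∀ u, θ u + g n + 1 = B u := by
      intro u; simp only [hBdef]; rw [hθ u]; ring
    have hBint : ∀ c : ℝ, 0 ≤ c → ∫ u in (0:ℝ)..c, B u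
        = g n * (((1+k*c) * Real.log (1+k*c) - (1+k*c) + 1)/k) + (g n + 1) * c := by
      intro c hc
      simp only [hBdef]
      rw [intervalIntegral.integral_add ((hlogint c hc).const_mul (g n))
          intervalIntegrable_const,
        intervalIntegral.integral_const_mul, smart_log_integral_aux k c hk hc,
        intervalIntegral.integral_const]
      simp [smul_eq_mul]
      ring
    by_cases hc : g n ≤ Sg n
    · -- min = g n; use the uniform bound θ u + g n + 1
      have hmono := intervalIntegral.integral_mono_on zero_le_one hInt (hBcont 1 zero_le_one)
        (fun v hv => by rw [← hBeq v]; exact P1 v hv)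
      have hBv := hBint 1 zero_le_one
      have hEe : 1 + k*1 = E := by rw [hkdef]; ring
      rw [hEe, hE, Real.log_exp, ← hE] at hBv
      have hval : g n * ((E * 1 - E + 1)/k) + (g n + 1) * 1 = E/k * g n + 1 := by
        field_simp
        ring
      rw [min_eq_right hc]
      rw [hBv, hval] at hmono
      exact hmono
    · -- min = Sg n; split the integral at u₀
      push_neg at hc
      set x : ℝ := Sg n / g n with hxdef
      set Y : ℝ := Real.exp x with hYdef
      set u₀ : ℝ := (Y - 1)/k with hu₀def
      have hgne : g n ≠ 0 := ne_of_gt hgn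
      have hx0 : 0 ≤ x := div_nonneg (hSgnn n le_rfl) (le_of_lt hgn)
      have hx1 : x ≤ 1 := by rw [hxdef, div_le_one hgn]; linarith
      have hY1 : 1 ≤ Y := Real.one_le_exp hx0
      have hYE : Y ≤ E := by rw [hYdef, hE]; exact Real.exp_le_exp.mpr hx1
      have hu00 : 0 ≤ u₀ := div_nonneg (by linarith) (le_of_lt hk)
      have hu01 : u₀ ≤ 1 := by rw [hu₀def, div_le_one hk, hkdef]; linarith
      have hYk : 1 + k * u₀ = Y := by rw [hu₀def]; field_simp; ring
      have hSgx : Sg n = g n * x := by rw [hxdef]; field_simp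
      have hθu₀ : ∀ u, u₀ ≤ u → Sg n ≤ θ u := by
        intro u hu
        rw [hθ u]
        have h1 : Y ≤ 1 + k*u := by
          rw [← hYk]
          have := mul_le_mul_of_nonneg_left hu (le_of_lt hk)
          linarith
        have hY0 : (0:ℝ) < Y := by rw [hYdef]; exact Real.exp_pos x
        have h2 : Real.log Y ≤ Real.log (1+k*u) := Real.log_le_log hY0 h1
        have h3 : Real.log Y = x := by rw [hYdef]; exact Real.log_exp x
        rw [h3] at h2
        have := mul_le_mul_of_nonneg_left h2 (le_of_lt hgn)
        linarith [hSgx]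
      have hI1 : IntervalIntegrable R MeasureTheory.volume 0 u₀ :=
        hInt.mono_set (by
          rw [Set.uIcc_of_le hu00, Set.uIcc_of_le zero_le_one]
          exact Set.Icc_subset_Icc le_rfl hu01)
      have hI2 : IntervalIntegrable R MeasureTheory.volume u₀ 1 :=
        hInt.mono_set (by
          rw [Set.uIcc_of_le hu01, Set.uIcc_of_le zero_le_one]
          exact Set.Icc_subset_Icc hu00 le_rfl)
      have hsplit : ∫ u in (0:ℝ)..1, R u
          = (∫ u in (0:ℝ)..u₀, R u) + ∫ u in u₀..(1:ℝ), R u :=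
        (intervalIntegral.integral_add_adjacent_intervals hI1 hI2).symm
      have hA : ∫ u in (0:ℝ)..u₀, R u ≤ g n * ((Y * x - Y + 1)/k) + (g n + 1) * u₀ := by
        have hmono := intervalIntegral.integral_mono_on hu00 hI1 (hBcont u₀ hu00)
          (fun v hv => by
            rw [← hBeq v]; exact P1 v ⟨hv.1, le_trans hv.2 hu01⟩)
        have hBv := hBint u₀ hu00
        rw [hYk] at hBv
        have hlY : Real.log Y = x := by rw [hYdef]; exact Real.log_exp x
        rw [hlY] at hBv
        rw [hBv] at hmono
        have : Y * x - Y + 1 = Y * x - Y + 1 := rfl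
        linarith [hmono]
      have hB2 : ∫ u in u₀..(1:ℝ), R u ≤ (1 - u₀) * Sg n := by
        have h1 := intervalIntegral.integral_mono_on (μ := MeasureTheory.volume) hu01 hI2
          intervalIntegrable_const
          (fun v hv => P2 v ⟨le_trans hu00 hv.1, hv.2⟩ (hθu₀ v hv.1))
        rw [intervalIntegral.integral_const] at h1
        simpa [smul_eq_mul] using h1
      rw [min_eq_left (le_of_lt hc), hsplit]
      have hEk : E = k + 1 := by rw [hkdef]; ring
      have final : g n * ((Y * x - Y + 1)/k) + (g n + 1) * u₀ + (1 - u₀) * Sg n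
          ≤ E/k * Sg n + 1 := by
        rw [hSgx, hu₀def, hEk]
        rw [← sub_nonneg]
        have hk' : k ≠ 0 := ne_of_gt hk
        have hdiff : (k+1)/k * (g n * x) + 1
            - (g n * ((Y*x - Y + 1)/k) + (g n + 1)*((Y - 1)/k) + (1 - (Y - 1)/k)*(g n * x))
            = (k + 1 - Y)/k := by
          field_simp
          ring
        rw [hdiff]
        exact div_nonneg (by linarith) (le_of_lt hk)
      linarith
  · -- not integrable: the integral is 0 and the RHS is nonnegative
    rw [intervalIntegral.integral_undef hInt]
    have h1 : 0 ≤ min (Sg n) (g n) := le_min (hSgnn n le_rfl) (hg0 n)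
    have h2 : (0:ℝ) < E / k := div_pos (by linarith) hk
    nlinarith [mul_nonneg (le_of_lt h2) h1]
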